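/- arXiv:1704.03488 — 5 statements merged into one kernel-verified Lean document; each statement's English description precedes it below -/
import Mathlib

section
/- Let H : ℝ^m → ℝ be convex differentiable, A : ℝ^n → ℝ^m linear, G : ℝ^n → ℝ^n, and γ, τ > 0, θ ∈ ℝ. Suppose (z, y, u, ū) is a fixed point of the PDHG1-type scheme z⁺ = z + γAū − γ prox_{(1/γ)H}((1/γ)z + Aū), y⁺ = y + γū − γG((1/γ)y + ū), u⁺ = u − τA^T z⁺ − τ y⁺, ū⁺ = u⁺ + θ(u⁺ − u). Then ū = u, z = ∇H(Au), y = −A^T∇H(Au), and u = G(u − (1/γ)A^T∇H(Au)). -/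
open ContinuousLinearMap

/-- first-order optimality of the prox: `p - b + lam • F'(p) = 0`. -/
lemma prox_opt {k : ℕ} (lam : ℝ) (F : EuclideanSpace ℝ (Fin k) → ℝ)
    (F' : EuclideanSpace ℝ (Fin k) → EuclideanSpace ℝ (Fin k))
    (hF : ∀ x, HasGradientAt F (F' x) x)
    (b p : EuclideanSpace ℝ (Fin k))
    (hp : ∀ v, (1/2) * ‖p - b‖^2 + lam * F p ≤ (1/2) * ‖v - b‖^2 + lam * F v) :
    p - b + lam • F' p = 0 := by
  set Φ : EuclideanSpace ℝ (Fin k) → ℝ := fun v => (1/2) * ‖v - b‖^2 + lam * F v with hΦ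
  have hmin : IsLocalMin Φ p := Filter.Eventually.of_forall hp
  have hd1 : HasFDerivAt (fun v : EuclideanSpace ℝ (Fin k) => ‖v - b‖^2)
      (2 • (innerSL ℝ (p - b))) p := by
    have := ((hasFDerivAt_id p).sub_const b).norm_sq
    simpa using this
  have hd : HasFDerivAt Φ
      ((1/2 : ℝ) • (2 • (innerSL ℝ (p - b))) + lam • (InnerProductSpace.toDual ℝ _ (F' p))) p :=
    (hd1.const_mul (1/2)).add (((hF p).hasFDerivAt).const_mul lam)
  have h0 := hmin.hasFDerivAt_eq_zero hd
  have h1 : ∀ w : EuclideanSpace ℝ (Fin k),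
      (inner ℝ (p - b) w : ℝ) + lam * (inner ℝ (F' p) w : ℝ) = 0 := by
    intro w
    have := congrFun (congrArg DFunLike.coe h0) w
    simpa [smul_smul, InnerProductSpace.toDual_apply_apply, real_inner_smul_left, sub_mul, Finset.sum_sub_distrib, inner_sub_left] using this
  have h2 : ∀ w : EuclideanSpace ℝ (Fin k),
      (inner ℝ (p - b + lam • F' p) w : ℝ) = 0 := by
    intro w
    rw [inner_add_left, real_inner_smul_left]
    exact h1 w
  exact inner_self_eq_zero.mp (h2 _)

/-- `proxProp lam F b w` expresses `w = prox_{lam·F}(b)`. -/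
def proxProp {k : ℕ} (lam : ℝ) (F : EuclideanSpace ℝ (Fin k) → ℝ)
    (b w : EuclideanSpace ℝ (Fin k)) : Prop :=
  ∀ v, (1/2) * ‖w - b‖^2 + lam * F w ≤ (1/2) * ‖v - b‖^2 + lam * F v

theorem pdhg1_fixed_point {n m : ℕ}
    (H : EuclideanSpace ℝ (Fin m) → ℝ)
    (H' : EuclideanSpace ℝ (Fin m) → EuclideanSpace ℝ (Fin m))
    (hHconv : ConvexOn ℝ Set.univ H)
    (hH : ∀ x, HasGradientAt H (H' x) x)
    (A : EuclideanSpace ℝ (Fin n) →L[ℝ] EuclideanSpace ℝ (Fin m))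
    (G : EuclideanSpace ℝ (Fin n) → EuclideanSpace ℝ (Fin n))
    (γ τ θ : ℝ) (hγ : 0 < γ) (hτ : 0 < τ)
    (z p : EuclideanSpace ℝ (Fin m)) (y u ubar : EuclideanSpace ℝ (Fin n))
    -- `p` is the prox step in the `z`-update
    (hp : proxProp (1/γ) H ((1/γ) • z + A ubar) p)
    -- fixed-point equations of the PDHG1-type scheme
    (hz : z = z + γ • (A ubar) - γ • p)
    (hy : y = y + γ • ubar - γ • G ((1/γ) • y + ubar))
    (hu : u = u - τ • (adjoint A) z - τ • y)
    (hub : ubar = u + θ • (u - u)) :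
    ubar = u ∧ z = H' (A u) ∧ y = -(adjoint A) (H' (A u)) ∧
      u = G (u - (1/γ) • (adjoint A) (H' (A u))) := by
  have hγ0 : γ ≠ 0 := hγ.ne'
  have huu : ubar = u := by simpa using hub
  subst huu
  -- p = A ubar
  have hpA : p = A ubar := by
    have h : γ • (A ubar) - γ • p = 0 := by
      have := hz
      rw [add_sub_assoc] at this
      have h2 : z + (γ • A ubar - γ • p) = z + 0 := by simpa using this.symm
      simpa using (add_left_cancel h2)
    have := sub_eq_zero.mp h
    exact (smul_right_injective _ hγ0 this.symm)
  -- optimality of prox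
  have hopt := prox_opt (1/γ) H H' hH ((1/γ) • z + A ubar) p hp
  rw [hpA] at hopt
  have hzH : z = H' (A ubar) := by
    have h : (1/γ) • (H' (A ubar) - z) = 0 := by
      rw [smul_sub]
      have : A ubar - ((1/γ) • z + A ubar) + (1/γ) • H' (A ubar) = 0 := hopt
      abel_nf at this ⊢
      linear_combination (norm := module) this
    have := smul_right_injective (EuclideanSpace ℝ (Fin m)) (by positivity : (1/γ:ℝ) ≠ 0)
      (by simpa using h : (1/γ) • (H' (A ubar) - z) = (1/γ) • (0 : EuclideanSpace ℝ (Fin m)))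
    have := sub_eq_zero.mp this
    exact this.symm
  -- y = - adjoint A z
  have hyz : y = -(adjoint A) z := by
    have h : τ • ((adjoint A) z + y) = 0 := by
      have h2 : ubar - (τ • (adjoint A) z + τ • y) = ubar := by
        rw [← sub_sub]; exact hu.symm
      rw [smul_add]; exact sub_eq_self.mp h2
    have := smul_right_injective (EuclideanSpace ℝ (Fin n)) hτ.ne'
      (by simpa using h : τ • ((adjoint A) z + y) = τ • (0 : EuclideanSpace ℝ (Fin n)))
    exact eq_neg_of_add_eq_zero_right this
  -- the G fixed point
  have hG : ubar = G ((1/γ) • y + ubar) := by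
    have h : γ • ubar - γ • G ((1/γ) • y + ubar) = 0 := by
      have := hy
      rw [add_sub_assoc] at this
      have h2 : y + (γ • ubar - γ • G ((1/γ) • y + ubar)) = y + 0 := by simpa using this.symm
      simpa using (add_left_cancel h2)
    exact smul_right_injective (EuclideanSpace ℝ (Fin n)) hγ0 (sub_eq_zero.mp h)
  refine ⟨rfl, hzH, by rw [hzH] at hyz; exact hyz, ?_⟩
  rw [hzH] at hyz
  have harg : (1/γ) • y + ubar = ubar - (1/γ) • (adjoint A) (H' (A ubar)) := by
    rw [hyz]; module
  rw [← harg]; exact hG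
end

section
/- Let H : ℝ^n → ℝ be convex differentiable, G : ℝ^n → ℝ^n, γ, τ > 0, θ ∈ ℝ. Suppose (y, u, ū) is a fixed point of the PDHG2-type scheme y⁺ = y + γū − γG((1/γ)y + ū), u⁺ = prox_{τH}(u − τy⁺), ū⁺ = u⁺ + θ(u⁺ − u). Then ū = u, y = −∇H(u), and u = G(u − (1/γ)∇H(u)). -/
open InnerProductSpace in
lemma half_norm_sq_gradient {k : ℕ} (b x : EuclideanSpace ℝ (Fin k)) :
    HasFDerivAt (fun v : EuclideanSpace ℝ (Fin k) => (1/2 : ℝ) * ‖v - b‖^2)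
      (toDual ℝ (EuclideanSpace ℝ (Fin k)) (x - b)) x := by
  have h1 : HasFDerivAt (fun v : EuclideanSpace ℝ (Fin k) => v - b)
      (ContinuousLinearMap.id ℝ (EuclideanSpace ℝ (Fin k))) x :=
    (hasFDerivAt_id x).sub_const b
  have h2 := h1.inner ℝ h1
  have h3 := h2.const_mul (1/2 : ℝ)
  have heq : (fun v : EuclideanSpace ℝ (Fin k) => (1/2 : ℝ) * ⟪v - b, v - b⟫_ℝ)
      = (fun v : EuclideanSpace ℝ (Fin k) => (1/2 : ℝ) * ‖v - b‖^2) := by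
    funext v; rw [real_inner_self_eq_norm_sq]
  rw [heq] at h3
  refine h3.congr_fderiv ?_
  ext w
  simp only [ContinuousLinearMap.coe_smul', Pi.smul_apply, ContinuousLinearMap.comp_apply,
    ContinuousLinearMap.prod_apply, ContinuousLinearMap.id_apply, fderivInnerCLM_apply,
    InnerProductSpace.toDual_apply_apply, smul_eq_mul]
  rw [real_inner_comm w]
  ring

theorem pdhg2_fixed_point {n : ℕ}
    (H : EuclideanSpace ℝ (Fin n) → ℝ)
    (H' : EuclideanSpace ℝ (Fin n) → EuclideanSpace ℝ (Fin n))
    (hHconv : ConvexOn ℝ Set.univ H)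
    (hH : ∀ x, HasGradientAt H (H' x) x)
    (G : EuclideanSpace ℝ (Fin n) → EuclideanSpace ℝ (Fin n))
    (γ τ θ : ℝ) (hγ : 0 < γ) (hτ : 0 < τ)
    (y u ubar : EuclideanSpace ℝ (Fin n))
    -- fixed-point equations of the PDHG2-type scheme (the new `y` equals `y`)
    (hy : y = y + γ • ubar - γ • G ((1/γ) • y + ubar))
    (hu : proxProp τ H (u - τ • y) u)
    (hub : ubar = u + θ • (u - u)) :
    ubar = u ∧ y = -H' u ∧ u = G (u - (1/γ) • H' u) := by
  have hub' : ubar = u := by simp at hub; exact hub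
  -- gradient of the prox objective at u
  set b : EuclideanSpace ℝ (Fin n) := u - τ • y with hb
  set F : EuclideanSpace ℝ (Fin n) → ℝ :=
    fun v => (1/2 : ℝ) * ‖v - b‖^2 + τ * H v with hF
  have hHgrad : HasFDerivAt H (InnerProductSpace.toDual ℝ _ (H' u)) u :=
    (hH u).hasFDerivAt
  have hFgrad : HasFDerivAt F
      (InnerProductSpace.toDual ℝ _ ((u - b) + τ • H' u)) u := by
    have := (half_norm_sq_gradient b u).add (hHgrad.const_mul τ)
    refine HasFDerivAt.congr_fderiv (f := F) this ?_
    ext w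
    simp [real_inner_smul_left, inner_add_left]
  have hmin : IsLocalMin F u := by
    apply Filter.Eventually.of_forall
    intro v
    exact hu v
  have hzero := hmin.hasFDerivAt_eq_zero hFgrad
  have hzero' : (u - b) + τ • H' u = 0 := by
    have := (InnerProductSpace.toDual ℝ (EuclideanSpace ℝ (Fin n))).map_zero
    exact (InnerProductSpace.toDual ℝ _).injective (by rw [hzero, this])
  have hub2 : u - b = τ • y := by rw [hb]; abel
  rw [hub2] at hzero'
  have hy' : y = -H' u := by
    have h4 : τ • (y + H' u) = 0 := by rw [smul_add]; exact hzero'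
    have := smul_eq_zero.mp h4
    rcases this with h | h
    · exact absurd h (ne_of_gt hτ)
    · have : y + H' u = 0 := h
      linear_combination (norm := module) this
  refine ⟨hub', hy', ?_⟩
  have h5 : γ • ubar = γ • G ((1/γ) • y + ubar) := by
    have h0 : γ • ubar - γ • G ((1/γ) • y + ubar) = 0 := by
      linear_combination (norm := module) - hy
    linear_combination (norm := module) h0
  have h6 : ubar = G ((1/γ) • y + ubar) :=
    smul_right_injective _ (ne_of_gt hγ) h5
  rw [hub', hy'] at h6
  convert h6 using 2
  rw [smul_neg]
  abel
end

section
/- Let G : ℝ^n → ℝ^n be continuous, H : ℝ^m → ℝ convex differentiable, A : ℝ^n → ℝ^m linear, and γ, τ > 0. The set of points u ∈ ℝ^n arising as the u-component of fixed points of the ADMM-based scheme (with G replacing prox of the regularizer, step parameter γ) equals the set of u-components of fixed points of the PDHG2-based scheme (with G replacing prox of the regularizer, dual step γ, primal step τ = 1/γ): both equal { u : u = G(u − (1/γ)A^T∇H(Au)) }. -/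
open ContinuousLinearMap

section Aux

open InnerProductSpace Set

local notation "⟪" x ", " y "⟫" => @inner ℝ _ _ x y

variable {E F : Type*} [NormedAddCommGroup E] [InnerProductSpace ℝ E] [CompleteSpace E]
  [NormedAddCommGroup F] [InnerProductSpace ℝ F] [CompleteSpace F]

/-- First-order condition for a convex function with a gradient. -/
lemma aux_convex_first_order {H : F → ℝ} {g x : F}
    (hconv : ConvexOn ℝ Set.univ H) (hg : HasGradientAt H g x) (z : F) :
    H x + ⟪g, z - x⟫ ≤ H z := by
  set f : ℝ → ℝ := fun t => H (x + t • (z - x)) with hf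
  have hcurve : HasDerivAt (fun s : ℝ => x + s • (z - x)) (z - x) 0 := by
    simpa using ((hasDerivAt_id (0:ℝ)).smul_const (z - x)).const_add x
  have hg' : HasFDerivAt H (toDual ℝ F g) ((fun s : ℝ => x + s • (z - x)) 0) := by
    simpa using hg.hasFDerivAt
  have hfd : HasDerivAt f ⟪g, z - x⟫ 0 := by
    have := hg'.comp_hasDerivAt 0 hcurve
    simp only [toDual_apply_apply] at this
    exact this
  have hconvf : ConvexOn ℝ Set.univ f := by
    have h := hconv.comp_affineMap (AffineMap.lineMap x z : ℝ →ᵃ[ℝ] F)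
    simp only [Set.preimage_univ] at h
    have heq : f = H ∘ (AffineMap.lineMap x z : ℝ →ᵃ[ℝ] F) := by
      funext t
      simp only [f, Function.comp_apply, AffineMap.lineMap_apply_module]
      congr 1
      module
    rw [heq]
    exact h
  have hsl := hconvf.le_slope_of_hasDerivWithinAt_Ioi (mem_univ (0:ℝ)) (mem_univ (1:ℝ))
    one_pos hfd.hasDerivWithinAt
  rw [slope_def_field] at hsl
  simp only [f, zero_smul, add_zero, one_smul, sub_zero, div_one] at hsl
  have h1 : x + (z - x) = z := by abel
  rw [h1] at hsl
  linarith

lemma aux_prox_iff {H : F → ℝ} {H' : F → F}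
    (hHconv : ConvexOn ℝ Set.univ H) (hH : ∀ x, HasGradientAt H (H' x) x)
    (A : E →L[ℝ] F) {lam : ℝ} (hlam : 0 ≤ lam) (b u : E) :
    (∀ v, (1/2) * ‖u - b‖^2 + lam * H (A u) ≤ (1/2) * ‖v - b‖^2 + lam * H (A v)) ↔
      u = b - lam • adjoint A (H' (A u)) := by
  set P := adjoint A (H' (A u)) with hP
  have hgrad : HasFDerivAt (fun w : E => (1/2) * ‖w - b‖^2 + lam * H (A w))
      (toDual ℝ E ((u - b) + lam • P)) u := by
    have h1 : HasFDerivAt (fun w : E => w - b) (ContinuousLinearMap.id ℝ E) u :=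
      (hasFDerivAt_id u).sub_const b
    have hq : HasFDerivAt (fun w : E => (1/2) * ‖w - b‖^2) (toDual ℝ E (u - b)) u := by
      have h2 := (h1.inner ℝ h1).const_mul (1/2 : ℝ)
      convert h2 using 1
      · rfl
      · rfl
      · funext w
        rw [real_inner_self_eq_norm_sq]
      · ext h
        simp only [toDual_apply_apply, ContinuousLinearMap.smul_apply, ContinuousLinearMap.comp_apply,
          ContinuousLinearMap.prod_apply, ContinuousLinearMap.id_apply, fderivInnerCLM_apply,
          smul_eq_mul]
        rw [real_inner_comm h (u - b)]
        ring
    have hh : HasFDerivAt (fun w : E => H (A w)) ((toDual ℝ F (H' (A u))).comp A) u :=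
      (hH (A u)).hasFDerivAt.comp u A.hasFDerivAt
    have hkey : (toDual ℝ F (H' (A u))).comp A = toDual ℝ E P := by
      ext x
      simp [toDual_apply_apply, hP, adjoint_inner_left]
    have h3 := hq.add (hh.const_mul lam)
    rw [hkey] at h3
    convert h3 using 1
    · rfl
    · rfl
    · rfl
    simp [map_add, map_smul]
  constructor
  · intro hmin
    have hloc : IsLocalMin (fun w : E => (1/2) * ‖w - b‖^2 + lam * H (A w)) u :=
      Filter.Eventually.of_forall hmin
    have hz := hloc.hasFDerivAt_eq_zero hgrad
    have h0 : (u - b) + lam • P = 0 := (toDual ℝ E).map_eq_zero_iff.mp hz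
    have h4 : u + lam • P - b = 0 := by rw [← h0]; abel
    rw [eq_sub_iff_add_eq]
    have := sub_eq_zero.mp h4
    linear_combination (norm := module) this
  · intro heq v
    have hfo := aux_convex_first_order hHconv (hH (A u)) (A v)
    have hinner : ⟪H' (A u), A v - A u⟫ = ⟪P, v - u⟫ := by
      rw [hP, ← map_sub, adjoint_inner_left]
    have hub : u - b = -(lam • P) := by rw [heq]; abel
    have hdecomp : v - b = (u - b) + (v - u) := by abel
    have e1 : ‖v - b‖^2 = ‖u - b‖^2 + 2*⟪u - b, v - u⟫ + ‖v - u‖^2 := by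
      rw [← real_inner_self_eq_norm_sq, ← real_inner_self_eq_norm_sq,
        ← real_inner_self_eq_norm_sq, hdecomp, real_inner_add_add_self]
    have hmul : lam * ⟪P, v - u⟫ ≤ lam * H (A v) - lam * H (A u) := by
      have h5 : ⟪P, v - u⟫ ≤ H (A v) - H (A u) := by rw [← hinner]; linarith
      nlinarith
    have hsum : ⟪u - b, v - u⟫ + lam * ⟪P, v - u⟫ = 0 := by
      rw [hub, inner_neg_left, real_inner_smul_left]
      ring
    nlinarith [sq_nonneg ‖v - u‖, e1, hmul, hsum]

end Aux

lemma proxProp_iff {n m : ℕ} {H : EuclideanSpace ℝ (Fin m) → ℝ}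
    {H' : EuclideanSpace ℝ (Fin m) → EuclideanSpace ℝ (Fin m)}
    (hHconv : ConvexOn ℝ Set.univ H) (hH : ∀ x, HasGradientAt H (H' x) x)
    (A : EuclideanSpace ℝ (Fin n) →L[ℝ] EuclideanSpace ℝ (Fin m)) {lam : ℝ} (hlam : 0 ≤ lam)
    (b u : EuclideanSpace ℝ (Fin n)) :
    proxProp lam (fun x => H (A x)) b u ↔ u = b - lam • adjoint A (H' (A u)) :=
  aux_prox_iff hHconv hH A hlam b u

/-- The `u`-components of fixed points of the ADMM-based scheme and of the PDHG2-based
scheme (with primal step `τ = 1/γ`) both coincide with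
`{u : u = G(u − (1/γ)Aᵀ∇H(Au))}`. -/
theorem admm_pdhg2_fixed_point_sets {n m : ℕ}
    (G : EuclideanSpace ℝ (Fin n) → EuclideanSpace ℝ (Fin n)) (hG : Continuous G)
    (H : EuclideanSpace ℝ (Fin m) → ℝ)
    (H' : EuclideanSpace ℝ (Fin m) → EuclideanSpace ℝ (Fin m))
    (hHconv : ConvexOn ℝ Set.univ H)
    (hH : ∀ x, HasGradientAt H (H' x) x)
    (A : EuclideanSpace ℝ (Fin n) →L[ℝ] EuclideanSpace ℝ (Fin m))
    (γ θ : ℝ) (hγ : 0 < γ) :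
    ({u : EuclideanSpace ℝ (Fin n) | ∃ v y,
        proxProp (1/γ) (fun x => H (A x)) (v - (1/γ) • y) u ∧
        v = G (u + (1/γ) • y) ∧
        y = y + γ • (u - v)} =
      {u : EuclideanSpace ℝ (Fin n) | u = G (u - (1/γ) • (adjoint A) (H' (A u)))}) ∧
    ({u : EuclideanSpace ℝ (Fin n) | ∃ y ubar,
        y = y + γ • ubar - γ • G ((1/γ) • y + ubar) ∧
        proxProp (1/γ) (fun x => H (A x)) (u - (1/γ) • y) u ∧
        ubar = u + θ • (u - u)} =
      {u : EuclideanSpace ℝ (Fin n) | u = G (u - (1/γ) • (adjoint A) (H' (A u)))}) := by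
  have hγ0 : γ ≠ 0 := hγ.ne'
  have hlam : (0:ℝ) ≤ 1/γ := by positivity
  have hlam0 : (1:ℝ)/γ ≠ 0 := by positivity
  constructor
  · ext u
    set P := adjoint A (H' (A u)) with hPdef
    simp only [Set.mem_setOf_eq]
    constructor
    · rintro ⟨v, y, hprox, hv, hy⟩
      have huv : u = v := by
        have h1 : γ • (u - v) = 0 := by
          have h2 := sub_eq_zero.mpr hy.symm
          calc γ • (u - v) = (y + γ • (u - v)) - y := by abel
            _ = 0 := h2
        exact sub_eq_zero.mp ((smul_eq_zero.mp h1).resolve_left hγ0)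
      rw [proxProp_iff hHconv hH A hlam] at hprox
      rw [← huv] at hprox
      have hyP : y = -P := by
        have h2 : (1/γ) • (y + P) = 0 := by
          rw [smul_add]
          linear_combination (norm := module) hprox
        exact eq_neg_of_add_eq_zero_left ((smul_eq_zero.mp h2).resolve_left hlam0)
      calc u = v := huv
        _ = G (u + (1/γ) • y) := hv
        _ = G (u - (1/γ) • P) := by
            have harg : u + (1/γ) • (-P : EuclideanSpace ℝ (Fin n)) = u - (1/γ) • P := by
              module
            rw [hyP, harg]
    · intro hu
      refine ⟨u, -P, ?_, ?_, ?_⟩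
      · rw [proxProp_iff hHconv hH A hlam]
        module
      · have h3 : u + (1/γ) • (-P : EuclideanSpace ℝ (Fin n)) = u - (1/γ) • P := by module
        rw [h3]
        exact hu
      · simp
  · ext u
    set P := adjoint A (H' (A u)) with hPdef
    simp only [Set.mem_setOf_eq]
    constructor
    · rintro ⟨y, ubar, h1, hprox, h3⟩
      have hub : ubar = u := by simpa using h3
      rw [hub] at h1
      have h0 : γ • u - γ • G ((1/γ) • y + u) = 0 := by
        have h2 := sub_eq_zero.mpr h1.symm
        calc γ • u - γ • G ((1/γ) • y + u)
            = (y + γ • u - γ • G ((1/γ) • y + u)) - y := by abel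
          _ = 0 := h2
      have hG1 : u = G ((1/γ) • y + u) :=
        smul_right_injective _ hγ0 (sub_eq_zero.mp h0)
      rw [proxProp_iff hHconv hH A hlam] at hprox
      have hyP : y = -P := by
        have h2 : (1/γ) • (y + P) = 0 := by
          rw [smul_add]
          linear_combination (norm := module) hprox
        exact eq_neg_of_add_eq_zero_left ((smul_eq_zero.mp h2).resolve_left hlam0)
      calc u = G ((1/γ) • y + u) := hG1
        _ = G (u - (1/γ) • P) := by
            have harg : (1/γ) • (-P : EuclideanSpace ℝ (Fin n)) + u = u - (1/γ) • P := by
              module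
            rw [hyP, harg]
    · intro hu
      refine ⟨-P, u, ?_, ?_, ?_⟩
      · have h3 : (1/γ) • (-P : EuclideanSpace ℝ (Fin n)) + u = u - (1/γ) • P := by module
        rw [h3, ← hu]
        module
      · rw [proxProp_iff hHconv hH A hlam]
        module
      · simp
end

section
/- Let G : ℝ^n → ℝ^n and H : ℝ^n → ℝ convex differentiable, and consider the PDHG2-type scheme with θ = 1, τ = 1/γ: y⁺ = y + γū − γG((1/γ)y + ū), u⁺ = prox_{(1/γ)H}(u − (1/γ)y⁺), ū⁺ = 2u⁺ − u. Then (y, u, ū) is a fixed point of this scheme if and only if (u, u, −γ·((1/γ)y)) suitably initialized gives a fixed point of the ADMM-type scheme with the same γ; in particular, the u-components of fixed points of the two schemes coincide and are exactly the solutions of u = G(u − (1/γ)∇H(u)). -/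
open Set Filter Topology

section Aux

variable {n : ℕ}

local notation "E" => EuclideanSpace ℝ (Fin n)

lemma myLineDeriv (H : E → ℝ) (g x d : E) (h : HasGradientAt H g x) :
    HasDerivAt (fun t : ℝ => H (x + t • d)) (inner ℝ g d : ℝ) 0 := by
  have hc : HasDerivAt (fun t : ℝ => x + t • d) d 0 := by
    simpa using ((hasDerivAt_id (0 : ℝ)).smul_const d).const_add x
  have hf : HasFDerivAt H (InnerProductSpace.toDual ℝ _ g) ((fun t : ℝ => x + t • d) 0) := by
    simpa using (hasGradientAt_iff_hasFDerivAt.mp h)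
  have h2 := hf.comp_hasDerivAt 0 hc
  simp at h2
  exact h2

lemma grad_ineq {H : E → ℝ} (hconv : ConvexOn ℝ Set.univ H) {g x : E}
    (h : HasGradientAt H g x) (y : E) :
    H x + (inner ℝ g (y - x) : ℝ) ≤ H y := by
  set d := y - x with hd
  have hderiv := myLineDeriv H g x d h
  rw [hasDerivAt_iff_tendsto_slope] at hderiv
  have hmono : 𝓝[>] (0:ℝ) ≤ 𝓝[≠] (0:ℝ) :=
    nhdsWithin_mono _ (fun t ht => ne_of_gt ht)
  have hbound : ∀ᶠ t in 𝓝[>] (0:ℝ), slope (fun t : ℝ => H (x + t • d)) 0 t ≤ H y - H x := by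
    filter_upwards [Ioc_mem_nhdsGT_of_mem (by simp : (0:ℝ) ∈ Set.Ico (0:ℝ) 1)] with t ht
    have ht0 : 0 < t := ht.1
    have ht1 : t ≤ 1 := ht.2
    have hcvx := hconv.2 (Set.mem_univ x) (Set.mem_univ y)
      (by linarith : (0:ℝ) ≤ 1 - t) (le_of_lt ht0) (by ring)
    have hxy : (1 - t) • x + t • y = x + t • d := by
      rw [hd]; module
    rw [hxy] at hcvx
    simp only [smul_eq_mul] at hcvx
    rw [slope_def_field]
    simp only [sub_zero, zero_smul, add_zero]
    rw [div_le_iff₀ ht0]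
    nlinarith [hcvx]
  have hle : (inner ℝ g d : ℝ) ≤ H y - H x :=
    le_of_tendsto (hderiv.mono_left hmono) hbound
  linarith

lemma prox_iff {H : E → ℝ} (hconv : ConvexOn ℝ Set.univ H)
    {H' : E → E} (hH : ∀ x, HasGradientAt H (H' x) x)
    {lam : ℝ} (hlam : 0 < lam) (b w : E) :
    proxProp lam H b w ↔ w - b + lam • H' w = 0 := by
  constructor
  · intro hp
    set d : E := w - b + lam • H' w with hdd
    have c : ℝ := inner ℝ (w - b) d
    -- derivative of the quadratic part along the line
    have hA : HasDerivAt (fun t : ℝ => (1/2) * ‖(w + t • d) - b‖^2)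
        ((inner ℝ (w - b) d : ℝ)) 0 := by
      have heq : (fun t : ℝ => (1/2) * ‖(w + t • d) - b‖^2)
          = fun t : ℝ => (1/2) * (‖w - b‖^2 + 2 * (t * (inner ℝ (w - b) d : ℝ))
              + t^2 * ‖d‖^2) := by
        funext t
        have h1 : (w + t • d) - b = (w - b) + t • d := by abel
        rw [h1, norm_add_sq_real, real_inner_smul_right, norm_smul]
        simp [mul_pow, Real.norm_eq_abs, sq_abs]
        try ring
      rw [heq]
      have h1 : HasDerivAt (fun t : ℝ => t * (inner ℝ (w - b) d : ℝ))
          (inner ℝ (w - b) d : ℝ) 0 := hasDerivAt_mul_const _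
      have h2 : HasDerivAt (fun t : ℝ => t^2) ((2:ℕ) * (0:ℝ)^1) 0 := hasDerivAt_pow 2 0
      have h3 := (((h1.const_mul 2).add (h2.mul_const (‖d‖^2))).const_add
          (‖w - b‖^2)).const_mul (1/2)
      convert h3 using 1
      · rfl
      · rfl
      · funext t; simp only [Pi.add_apply]; ring
      · push_cast; ring
    have hB : HasDerivAt (fun t : ℝ => lam * H (w + t • d))
        (lam * (inner ℝ (H' w) d : ℝ)) 0 := (myLineDeriv H (H' w) w d (hH w)).const_mul lam
    have hψ := hA.add hB
    have hmin : IsLocalMin (fun t : ℝ =>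
        (1/2) * ‖(w + t • d) - b‖^2 + lam * H (w + t • d)) 0 := by
      apply Filter.Eventually.of_forall
      intro t
      have := hp (w + t • d)
      simpa using this
    have hzero := hmin.hasDerivAt_eq_zero hψ
    have hinner : (inner ℝ d d : ℝ) = 0 := by
      rw [hdd]
      rw [inner_add_left, real_inner_smul_left]
      simpa [hdd] using hzero
    have : d = 0 := inner_self_eq_zero.mp hinner
    rwa [hdd] at this
  · intro heq v
    have hgi := grad_ineq hconv (hH w) v
    have h1 : lam * H w + lam * (inner ℝ (H' w) (v - w) : ℝ) ≤ lam * H v := by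
      nlinarith [hgi]
    have h2 : lam * (inner ℝ (H' w) (v - w) : ℝ) = (inner ℝ (b - w) (v - w) : ℝ) := by
      rw [← real_inner_smul_left]
      have : lam • H' w = b - w := by
        have := heq
        rw [← sub_eq_zero]
        rw [show lam • H' w - (b - w) = w - b + lam • H' w by abel]
        exact this
      rw [this]
    have h3 : ‖v - b‖^2 = ‖v - w‖^2 + 2 * (inner ℝ (v - w) (w - b) : ℝ) + ‖w - b‖^2 := by
      have : v - b = (v - w) + (w - b) := by abel
      rw [this, norm_add_sq_real]
    have h4 : (inner ℝ (v - w) (w - b) : ℝ) = - (inner ℝ (b - w) (v - w) : ℝ) := by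
      rw [real_inner_comm]
      rw [show w - b = -(b - w) by abel, inner_neg_left]
    nlinarith [sq_nonneg ‖v - w‖, h1, h2, h3, h4]

end Aux

/-- PDHG2 with `θ = 1`, `τ = 1/γ` versus ADMM: the `u`-components of fixed points of the
two schemes coincide, and both equal the solution set of `u = G(u − (1/γ)∇H(u))`. -/
theorem pdhg2_admm_fixed_point_relation {n : ℕ}
    (G : EuclideanSpace ℝ (Fin n) → EuclideanSpace ℝ (Fin n))
    (H : EuclideanSpace ℝ (Fin n) → ℝ)
    (H' : EuclideanSpace ℝ (Fin n) → EuclideanSpace ℝ (Fin n))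
    (hHconv : ConvexOn ℝ Set.univ H)
    (hH : ∀ x, HasGradientAt H (H' x) x)
    (γ : ℝ) (hγ : 0 < γ) :
    ({u : EuclideanSpace ℝ (Fin n) | ∃ y ubar,
        y = y + γ • ubar - γ • G ((1/γ) • y + ubar) ∧
        proxProp (1/γ) H (u - (1/γ) • y) u ∧
        ubar = u + (1 : ℝ) • (u - u)} =
      {u : EuclideanSpace ℝ (Fin n) | ∃ v y,
        proxProp (1/γ) H (v - (1/γ) • y) u ∧
        v = G (u + (1/γ) • y) ∧
        y = y + γ • (u - v)}) ∧
    ({u : EuclideanSpace ℝ (Fin n) | ∃ y ubar,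
        y = y + γ • ubar - γ • G ((1/γ) • y + ubar) ∧
        proxProp (1/γ) H (u - (1/γ) • y) u ∧
        ubar = u + (1 : ℝ) • (u - u)} =
      {u : EuclideanSpace ℝ (Fin n) | u = G (u - (1/γ) • H' u)}) := by
  have hγ' : γ ≠ 0 := ne_of_gt hγ
  have hlam : (0:ℝ) < 1/γ := by positivity
  -- characterization of set1
  have hset1 : ∀ u : EuclideanSpace ℝ (Fin n),
      (∃ y ubar : EuclideanSpace ℝ (Fin n),
        y = y + γ • ubar - γ • G ((1/γ) • y + ubar) ∧
        proxProp (1/γ) H (u - (1/γ) • y) u ∧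
        ubar = u + (1 : ℝ) • (u - u)) ↔ u = G (u - (1/γ) • H' u) := by
    intro u
    constructor
    · rintro ⟨y, ubar, h1, h2, h3⟩
      have hub : ubar = u := by simpa using h3
      subst hub
      rw [prox_iff hHconv hH hlam] at h2
      have hy : y = -H' ubar := by
        have : (1/γ) • (y + H' ubar) = 0 := by
          rw [show (1/γ) • (y + H' ubar)
              = ubar - (ubar - (1/γ) • y) + (1/γ) • H' ubar by module]
          exact h2
        have := smul_eq_zero.mp this
        rcases this with h | h
        · exact absurd h (ne_of_gt hlam)
        · rw [← sub_eq_zero]; rw [show y - -H' ubar = y + H' ubar by abel]; exact h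
      have hG : γ • ubar = γ • G ((1/γ) • y + ubar) := by
        have := h1
        rw [← sub_eq_zero] at this ⊢
        rw [show y - (y + γ • ubar - γ • G ((1/γ) • y + ubar))
            = -(γ • ubar - γ • G ((1/γ) • y + ubar)) by abel, neg_eq_zero] at this
        exact this
      have hG2 : ubar = G ((1/γ) • y + ubar) := smul_right_injective _ hγ' hG
      rw [hy] at hG2
      rw [show (1/γ) • -H' ubar + ubar = ubar - (1/γ) • H' ubar by module] at hG2
      exact hG2
    · intro hu
      refine ⟨-H' u, u, ?_, ?_, by simp⟩
      · rw [show (1/γ) • -H' u + u = u - (1/γ) • H' u by module, ← hu]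
        module
      · rw [prox_iff hHconv hH hlam]
        module
  -- characterization of set2
  have hset2 : ∀ u : EuclideanSpace ℝ (Fin n),
      (∃ v y : EuclideanSpace ℝ (Fin n),
        proxProp (1/γ) H (v - (1/γ) • y) u ∧
        v = G (u + (1/γ) • y) ∧
        y = y + γ • (u - v)) ↔ u = G (u - (1/γ) • H' u) := by
    intro u
    constructor
    · rintro ⟨v, y, h1, h2, h3⟩
      have hv : v = u := by
        have : γ • (u - v) = 0 := by
          rw [← sub_eq_zero] at h3
          rw [show y - (y + γ • (u - v)) = -(γ • (u - v)) by abel, neg_eq_zero] at h3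
          exact h3
        rcases smul_eq_zero.mp this with h | h
        · exact absurd h hγ'
        · rw [← sub_eq_zero]; rw [show v - u = -(u - v) by abel, neg_eq_zero]; exact h
      rw [hv] at h1 h2
      rw [prox_iff hHconv hH hlam] at h1
      have hy : y = -H' u := by
        have : (1/γ) • (y + H' u) = 0 := by
          rw [show (1/γ) • (y + H' u)
              = u - (u - (1/γ) • y) + (1/γ) • H' u by module]
          exact h1
        rcases smul_eq_zero.mp this with h | h
        · exact absurd h (ne_of_gt hlam)
        · rw [← sub_eq_zero, show y - -H' u = y + H' u by abel]; exact h
      rw [hy] at h2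
      rw [show u + (1/γ) • -H' u = u - (1/γ) • H' u by module] at h2
      exact h2
    · intro hu
      refine ⟨u, -H' u, ?_, ?_, by simp⟩
      · rw [prox_iff hHconv hH hlam]; module
      · rw [show u + (1/γ) • -H' u = u - (1/γ) • H' u by module]; exact hu
  constructor
  · ext u
    simp only [Set.mem_setOf_eq]
    rw [hset1 u, hset2 u]
  · ext u
    simp only [Set.mem_setOf_eq]
    exact hset1 u
end

section
/- Let J : ℝ^p → ℝ ∪ {+∞} be proper convex lsc, D : ℝ^n → ℝ^p linear, H convex differentiable on ℝ^n, G : ℝ^n → ℝ^n, and β, α, γ, τ > 0. Suppose (z, y, u, ū) is a fixed point of the prior-stacking scheme z⁺ = z + γDū − γ prox_{(β/γ)J}((1/γ)z + Dū), y⁺ = y + γū − γG((1/γ)y + ū), u⁺ = prox_{τα H}(u − τy⁺ − τD^Tz⁺), ū⁺ = 2u⁺ − u. Then ū = u, z ∈ β∂J(Du), y = −α∇H(u) − D^Tz, and u = G(u − (1/γ)(α∇H(u) + D^Tz)). -/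
open ContinuousLinearMap
open scoped RealInnerProductSpace

/-- `proxPropE lam F b w` expresses `w = prox_{lam·F}(b)` for an extended-real-valued `F`. -/
def proxPropE {k : ℕ} (lam : ℝ) (F : EuclideanSpace ℝ (Fin k) → EReal)
    (b w : EuclideanSpace ℝ (Fin k)) : Prop :=
  ∀ v, (((1/2) * ‖w - b‖^2 : ℝ) : EReal) + (lam : EReal) * F w ≤
    (((1/2) * ‖v - b‖^2 : ℝ) : EReal) + (lam : EReal) * F v

lemma hasGradientAt_half_sq {E : Type*} [NormedAddCommGroup E] [InnerProductSpace ℝ E]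
    [CompleteSpace E] (b x : E) :
    HasGradientAt (fun v => (1/2 : ℝ) * ‖v - b‖^2) (x - b) x := by
  rw [hasGradientAt_iff_hasFDerivAt]
  refine HasFDerivAt.of_isLittleO ?_
  have key : ∀ v : E,
      (1/2 : ℝ) * ‖v - b‖^2 - (1/2) * ‖x - b‖^2
        - ((InnerProductSpace.toDual ℝ E) (x - b)) (v - x) = (1/2) * ‖v - x‖^2 := by
    intro v
    have h1 : v - b = (x - b) + (v - x) := by abel
    have h2 : ‖(x - b) + (v - x)‖^2 = ‖x-b‖^2 + 2*⟪x-b, v-x⟫ + ‖v-x‖^2 :=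
      norm_add_sq_real _ _
    simp only [InnerProductSpace.toDual_apply_apply]
    rw [h1, h2]; ring
  have : (fun v => (1/2 : ℝ) * ‖v - b‖^2 - (1/2) * ‖x - b‖^2
      - ((InnerProductSpace.toDual ℝ E) (x - b)) (v - x))
      = fun v => (1/2 : ℝ) * ‖v - x‖^2 := funext key
  rw [this, Asymptotics.isLittleO_iff]
  intro c hc
  filter_upwards [Metric.ball_mem_nhds x (by positivity : (0:ℝ) < 2*c)] with v hv
  rw [Metric.mem_ball, dist_eq_norm] at hv
  have h3 : ‖(1/2 : ℝ) * ‖v - x‖^2‖ = (1/2) * ‖v - x‖^2 := by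
    rw [Real.norm_eq_abs, abs_of_nonneg (by positivity)]
  rw [h3]
  nlinarith [norm_nonneg (v - x)]

set_option maxHeartbeats 1000000 in
/-- Fixed points of the prior-stacking scheme: `ū = u`, `z ∈ β∂J(Du)`,
`y = −α∇H(u) − Dᵀz`, and `u = G(u − (1/γ)(α∇H(u) + Dᵀz))`. -/
theorem prior_stacking_fixed_point {n p : ℕ}
    (J : EuclideanSpace ℝ (Fin p) → EReal)
    (hJproper : ∃ x, J x ≠ ⊤) (hJbot : ∀ x, J x ≠ ⊥)
    (hJlsc : LowerSemicontinuous J)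
    (hJconv : ∀ x y : EuclideanSpace ℝ (Fin p), ∀ a b : ℝ, 0 ≤ a → 0 ≤ b → a + b = 1 →
      J (a • x + b • y) ≤ (a : EReal) * J x + (b : EReal) * J y)
    (D : EuclideanSpace ℝ (Fin n) →L[ℝ] EuclideanSpace ℝ (Fin p))
    (H : EuclideanSpace ℝ (Fin n) → ℝ)
    (H' : EuclideanSpace ℝ (Fin n) → EuclideanSpace ℝ (Fin n))
    (hHconv : ConvexOn ℝ Set.univ H)
    (hH : ∀ x, HasGradientAt H (H' x) x)
    (G : EuclideanSpace ℝ (Fin n) → EuclideanSpace ℝ (Fin n))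
    (β α γ τ : ℝ) (hβ : 0 < β) (hα : 0 < α) (hγ : 0 < γ) (hτ : 0 < τ)
    (z q : EuclideanSpace ℝ (Fin p)) (y u ubar : EuclideanSpace ℝ (Fin n))
    -- `q` is the prox step in the `z`-update
    (hq : proxPropE (β/γ) J ((1/γ) • z + D ubar) q)
    -- fixed-point equations of the prior-stacking scheme
    (hz : z = z + γ • D ubar - γ • q)
    (hy : y = y + γ • ubar - γ • G ((1/γ) • y + ubar))
    (hu : proxProp (τ * α) H (u - τ • y - τ • (adjoint D) z) u)
    (hub : ubar = (2 : ℝ) • u - u) :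
    ubar = u ∧
    (∀ v, (β : EReal) * J (D u) + ((⟪z, v - D u⟫ : ℝ) : EReal) ≤ (β : EReal) * J v) ∧
    y = -(α • H' u) - (adjoint D) z ∧
    u = G (u - (1/γ) • (α • H' u + (adjoint D) z)) := by
  have hγ0 : γ ≠ 0 := ne_of_gt hγ
  have hτ0 : τ ≠ 0 := ne_of_gt hτ
  -- Claim 1 : ubar = u
  have hub' : ubar = u := by rw [hub]; module
  -- q = D ubar
  have hqD : q = D ubar := by
    have h := hz
    rw [eq_sub_iff_add_eq] at h
    have h2 : z + γ • q = z + γ • D ubar := h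
    have h3 : γ • q = γ • D ubar := add_left_cancel h2
    exact smul_right_injective _ hγ0 h3
  have hqDu : q = D u := by rw [hqD, hub']
  -- Claim 3 : y = -(α • H' u) - Dᵀ z
  set b : EuclideanSpace ℝ (Fin n) := u - τ • y - τ • (adjoint D) z with hbdef
  have hymain : y = -(α • H' u) - (adjoint D) z := by
    set c : ℝ := τ * α with hc
    have hF1 : HasFDerivAt (fun v => (1/2 : ℝ) * ‖v - b‖^2)
        ((InnerProductSpace.toDual ℝ _) (u - b)) u := by
      have := hasGradientAt_half_sq b u
      rwa [hasGradientAt_iff_hasFDerivAt] at this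
    have hF2 : HasFDerivAt H ((InnerProductSpace.toDual ℝ _) (H' u)) u := by
      have := hH u
      rwa [hasGradientAt_iff_hasFDerivAt] at this
    have hF : HasFDerivAt (fun v => (1/2 : ℝ) * ‖v - b‖^2 + c * H v)
        ((InnerProductSpace.toDual ℝ _) ((u - b) + c • H' u)) u := by
      have h := hF1.add (hF2.const_mul c)
      rw [map_add, map_smul]
      exact h
    have hmin : IsLocalMin (fun v => (1/2 : ℝ) * ‖v - b‖^2 + c * H v) u :=
      Filter.Eventually.of_forall hu
    have hzero := hmin.hasFDerivAt_eq_zero hF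
    have hzero' : (u - b) + c • H' u = 0 :=
      (InnerProductSpace.toDual ℝ (EuclideanSpace ℝ (Fin n))).map_eq_zero_iff.mp hzero
    have hub2 : u - b = τ • y + τ • (adjoint D) z := by rw [hbdef]; module
    rw [hub2, hc] at hzero'
    have h5 : τ • (y + (adjoint D) z + α • H' u) = 0 := by
      rw [← hzero']; module
    have h6 : y + (adjoint D) z + α • H' u = 0 :=
      (smul_eq_zero.1 h5).resolve_left hτ0
    have h7 : y + ((adjoint D) z + α • H' u) = 0 := by rw [← h6]; abel
    have h8 := eq_neg_of_add_eq_zero_left h7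
    rw [h8]; module
  -- Claim 4 : u = G (...)
  have hGmain : u = G (u - (1/γ) • (α • H' u + (adjoint D) z)) := by
    have h := hy
    rw [eq_sub_iff_add_eq] at h
    have h2 : y + γ • G ((1/γ) • y + ubar) = y + γ • ubar := h
    have h3 : G ((1/γ) • y + ubar) = ubar :=
      smul_right_injective _ hγ0 (add_left_cancel h2)
    have h4 : (1/γ) • y + ubar = u - (1/γ) • (α • H' u + (adjoint D) z) := by
      rw [hymain, hub']; module
    rw [← h4, h3, hub']
  -- Claim 2 : subgradient inequality
  refine ⟨hub', ?_, hymain, hGmain⟩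
  set bp : EuclideanSpace ℝ (Fin p) := (1/γ) • z + D ubar with hbp
  have hlam : (0:ℝ) < β / γ := div_pos hβ hγ
  -- J q is finite
  obtain ⟨x₀, hx₀⟩ := hJproper
  have hJx₀ : J x₀ = ((J x₀).toReal : EReal) := (EReal.coe_toReal hx₀ (hJbot x₀)).symm
  have hJqtop : J q ≠ ⊤ := by
    intro htop
    have h := hq x₀
    rw [htop, EReal.coe_mul_top_of_pos hlam, EReal.add_top_of_ne_bot (EReal.coe_ne_bot _),
      hJx₀, ← EReal.coe_mul, ← EReal.coe_add, top_le_iff] at h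
    exact EReal.coe_ne_top _ h
  have hJq : J q = ((J q).toReal : EReal) := (EReal.coe_toReal hJqtop (hJbot q)).symm
  set Jq : ℝ := (J q).toReal with hJqdef
  intro v
  rw [← hqDu]
  by_cases hvtop : J v = ⊤
  · rw [hvtop, EReal.coe_mul_top_of_pos hβ]
    exact le_top
  have hJv : J v = ((J v).toReal : EReal) := (EReal.coe_toReal hvtop (hJbot v)).symm
  set Jv : ℝ := (J v).toReal with hJvdef
  -- key real inequality
  have key : (β/γ) * (Jq - Jv) ≤ ⟪q - bp, v - q⟫ := by
    by_contra hcon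
    push_neg at hcon
    set δ : ℝ := (β/γ) * (Jq - Jv) - ⟪q - bp, v - q⟫ with hδ
    have hδ0 : 0 < δ := by rw [hδ]; linarith
    set N : ℝ := ‖v - q‖^2 with hN
    have hN0 : 0 ≤ N := by rw [hN]; positivity
    set t : ℝ := min 1 (δ / (N + 1)) with ht
    have ht0 : 0 < t := lt_min one_pos (div_pos hδ0 (by linarith))
    have ht1 : t ≤ 1 := min_le_left _ _
    have ht2 : t ≤ δ / (N + 1) := min_le_right _ _
    -- instantiate the prox property at q + t • (v - q)
    have hpt : q + t • (v - q) = (1 - t) • q + t • v := by module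
    have hconvq := hJconv q v (1 - t) t (by linarith) (le_of_lt ht0) (by ring)
    have h := hq (q + t • (v - q))
    rw [hpt] at h
    have h2 : ((β/γ : ℝ) : EReal) * J ((1-t) • q + t • v) ≤
        ((β/γ : ℝ) : EReal) * ((((1-t) * Jq + t * Jv : ℝ)) : EReal) := by
      refine mul_le_mul_of_nonneg_left ?_ (by exact_mod_cast le_of_lt hlam)
      calc J ((1-t) • q + t • v) ≤ ((1-t : ℝ) : EReal) * J q + (t : EReal) * J v := hconvq
        _ = (((1-t) * Jq + t * Jv : ℝ) : EReal) := by
            rw [hJq, hJv, ← EReal.coe_mul, ← EReal.coe_mul, ← EReal.coe_add]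
    have h3 : (((1/2) * ‖q - bp‖^2 : ℝ) : EReal) + ((β/γ : ℝ) : EReal) * ((Jq : ℝ) : EReal) ≤
        (((1/2) * ‖(1-t) • q + t • v - bp‖^2 : ℝ) : EReal) +
          ((β/γ : ℝ) : EReal) * ((((1-t) * Jq + t * Jv : ℝ)) : EReal) := by
      calc (((1/2) * ‖q - bp‖^2 : ℝ) : EReal) + ((β/γ : ℝ) : EReal) * ((Jq : ℝ) : EReal)
          = (((1/2) * ‖q - bp‖^2 : ℝ) : EReal) + ((β/γ : ℝ) : EReal) * J q := by rw [← hJq]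
        _ ≤ (((1/2) * ‖(1-t) • q + t • v - bp‖^2 : ℝ) : EReal) +
            ((β/γ : ℝ) : EReal) * J ((1-t) • q + t • v) := h
        _ ≤ _ := add_le_add_right h2 _
    rw [← EReal.coe_mul, ← EReal.coe_mul, ← EReal.coe_add, ← EReal.coe_add,
      EReal.coe_le_coe_iff] at h3
    -- expand the norm
    have hexp : (1-t) • q + t • v - bp = (q - bp) + t • (v - q) := by module
    have hnorm : ‖(q - bp) + t • (v - q)‖^2
        = ‖q - bp‖^2 + 2 * (t * ⟪q - bp, v - q⟫) + t^2 * N := by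
      rw [norm_add_sq_real, real_inner_smul_right, norm_smul, Real.norm_eq_abs,
        mul_pow, sq_abs, hN]
    rw [hexp, hnorm] at h3
    -- derive the contradiction
    clear h h2 hconvq hq hJconv hJlsc hy hu hz hub hJx₀ hJq hJv
    have hineq : (β/γ) * t * (Jq - Jv) ≤ t * ⟪q - bp, v - q⟫ + t^2 / 2 * N := by
      nlinarith [h3]
    have htN : t * N ≤ δ / (N + 1) * N := mul_le_mul_of_nonneg_right ht2 hN0
    have hlt : δ / (N + 1) * N < δ := by
      rw [div_mul_eq_mul_div, div_lt_iff₀ (by linarith)]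
      nlinarith
    have h9 : t * N < δ := lt_of_le_of_lt htN hlt
    have h10 : t * (t * N) ≤ t * δ := mul_le_mul_of_nonneg_left h9.le ht0.le
    nlinarith [mul_pos ht0 hδ0, hineq, h10, hδ]
  -- convert to the stated form
  have hqbp : q - bp = -((1/γ) • z) := by rw [hbp, hqD]; module
  have hinner : ⟪q - bp, v - q⟫ = -((1/γ) * ⟪z, v - q⟫) := by
    rw [hqbp, inner_neg_left, real_inner_smul_left]
  rw [hinner] at key
  have hfin : β * Jq + ⟪z, v - q⟫ ≤ β * Jv := by
    have h := mul_le_mul_of_nonneg_left key (le_of_lt hγ)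
    rw [mul_neg] at h
    have e1 : γ * ((β/γ) * (Jq - Jv)) = β * (Jq - Jv) := by field_simp
    have e2 : γ * ((1/γ) * ⟪z, v - q⟫) = ⟪z, v - q⟫ := by field_simp
    rw [e1, e2] at h
    linarith
  rw [hJq, hJv, ← EReal.coe_mul, ← EReal.coe_mul, ← EReal.coe_add]
  exact_mod_cast hfin
end
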